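/- arXiv:1902.08809 — 4 statements merged into one kernel-verified Lean document; each statement's English description precedes it below -/
import Mathlib

section
/- Define B(α) = (1-α)^{1-α} / (α^α · (1-2α)^{1-2α}) for 0 < α < 1/2. Then B attains its maximum on (0, 1/2) at α = 1/2 - 1/(2√5), and B(α) < 1.6181 for all α ∈ (0, 1/2). -/
/-- `B(α) = (1-α)^(1-α) / (α^α (1-2α)^(1-2α))`, using real exponentiation. -/
noncomputable def B (a : ℝ) : ℝ :=
  (1 - a) ^ (1 - a) / (a ^ a * (1 - 2 * a) ^ (1 - 2 * a))

/-- on `(0, 1/2)`, `B` attains its maximum at `α = 1/2 - 1/(2√5)`,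
and `B(α) < 1.6181` for all `α ∈ (0, 1/2)`. -/
theorem B_max_and_bound :
    ∀ a : ℝ, 0 < a → a < 1 / 2 →
      B a ≤ B (1 / 2 - 1 / (2 * Real.sqrt 5)) ∧ B a < 1.6181 := by
  have h5 : Real.sqrt 5 ^ 2 = 5 := Real.sq_sqrt (by norm_num)
  have h5pos : (0:ℝ) < Real.sqrt 5 := Real.sqrt_pos.mpr (by norm_num)
  have h5lb : (2.236:ℝ) < Real.sqrt 5 := by nlinarith
  have h5ub : Real.sqrt 5 < 2.2361 := by nlinarith
  set φ : ℝ := (1 + Real.sqrt 5) / 2 with hφdef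
  clear_value φ
  have hφpos : 0 < φ := by rw [hφdef]; positivity
  have hφsq : φ ^ 2 = φ + 1 := by rw [hφdef]; nlinarith
  -- positivity of B
  have hBpos : ∀ a : ℝ, 0 < a → a < 1/2 → 0 < B a := by
    intro a ha hb
    have h1a : (0:ℝ) < 1 - a := by linarith
    have h2a : (0:ℝ) < 1 - 2*a := by linarith
    unfold B
    positivity
  -- log formula
  have hlogB : ∀ a : ℝ, 0 < a → a < 1/2 →
      Real.log (B a) = (1-a) * Real.log (1-a) - a * Real.log a
        - (1-2*a) * Real.log (1-2*a) := by
    intro a ha hb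
    have h1a : (0:ℝ) < 1 - a := by linarith
    have h2a : (0:ℝ) < 1 - 2*a := by linarith
    unfold B
    rw [Real.log_div (by positivity) (by positivity),
        Real.log_mul (by positivity) (by positivity),
        Real.log_rpow h1a, Real.log_rpow ha, Real.log_rpow h2a]
    ring
  -- B a ≤ φ
  have key : ∀ a : ℝ, 0 < a → a < 1/2 → B a ≤ φ := by
    intro a ha hb
    have h1a : (0:ℝ) < 1 - a := by linarith
    have h2a : (0:ℝ) < 1 - 2*a := by linarith
    have hx1 : (0:ℝ) < (1-a) / (a * φ^2) := by positivity
    have hx2 : (0:ℝ) < (1-a) / ((1-2*a) * φ) := by positivity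
    have l1 : Real.log ((1-a) / (a * φ^2)) ≤ (1-a) / (a * φ^2) - 1 :=
      Real.log_le_sub_one_of_pos hx1
    have l2 : Real.log ((1-a) / ((1-2*a) * φ)) ≤ (1-a) / ((1-2*a) * φ) - 1 :=
      Real.log_le_sub_one_of_pos hx2
    have e1 : Real.log ((1-a) / (a * φ^2))
        = Real.log (1-a) - Real.log a - 2 * Real.log φ := by
      rw [Real.log_div (by positivity) (by positivity),
          Real.log_mul (by positivity) (by positivity), Real.log_pow]
      push_cast; ring
    have e2 : Real.log ((1-a) / ((1-2*a) * φ))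
        = Real.log (1-a) - Real.log (1-2*a) - Real.log φ := by
      rw [Real.log_div (by positivity) (by positivity),
          Real.log_mul (by positivity) (by positivity)]
      ring
    have hsum : Real.log (B a) - Real.log φ
        = a * Real.log ((1-a) / (a * φ^2))
          + (1-2*a) * Real.log ((1-a) / ((1-2*a) * φ)) := by
      rw [hlogB a ha hb, e1, e2]; ring
    have hineq : Real.log (B a) - Real.log φ
        ≤ a * ((1-a) / (a * φ^2) - 1) + (1-2*a) * ((1-a) / ((1-2*a) * φ) - 1) := by
      rw [hsum]
      exact add_le_add (mul_le_mul_of_nonneg_left l1 ha.le)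
        (mul_le_mul_of_nonneg_left l2 h2a.le)
    have hrhs : a * ((1-a) / (a * φ^2) - 1) + (1-2*a) * ((1-a) / ((1-2*a) * φ) - 1) = 0 := by
      field_simp
      linear_combination (-(1-a)) * hφsq + φ * (mul_div_cancel₀ (1-a) (show (1:ℝ) - a*2 ≠ 0 by linarith))
    have hlog : Real.log (B a) ≤ Real.log φ := by linarith [hineq, hrhs.le]
    calc B a = Real.exp (Real.log (B a)) := (Real.exp_log (hBpos a ha hb)).symm
      _ ≤ Real.exp (Real.log φ) := Real.exp_le_exp.mpr hlog
      _ = φ := Real.exp_log hφpos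
  -- the critical point
  have e : 1/(2 * Real.sqrt 5) = Real.sqrt 5 / 10 := by
    rw [div_eq_div_iff (by positivity) (by norm_num)]
    nlinarith
  set c : ℝ := 1/2 - 1/(2 * Real.sqrt 5) with hcdef
  clear_value c
  have hce : c = 1/2 - Real.sqrt 5 / 10 := by rw [hcdef, e]
  have hc1 : 0 < c := by rw [hce]; nlinarith
  have hc2 : c < 1/2 := by rw [hce]; nlinarith
  have h1c : (0:ℝ) < 1 - c := by rw [hce]; nlinarith
  have h2c : (0:ℝ) < 1 - 2*c := by rw [hce]; nlinarith
  -- algebraic identities at c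
  have id1 : c * φ^2 = 1 - c := by
    rw [hce, hφdef]
    field_simp
    nlinarith
  have id2 : (1 - 2*c) * φ = 1 - c := by
    rw [hce, hφdef]
    field_simp
    nlinarith
  have hlogc1 : Real.log c = Real.log (1-c) - 2 * Real.log φ := by
    have : Real.log (c * φ^2) = Real.log c + 2 * Real.log φ := by
      rw [Real.log_mul (by positivity) (by positivity), Real.log_pow]
      push_cast; ring
    rw [id1] at this
    linarith
  have hlogc2 : Real.log (1-2*c) = Real.log (1-c) - Real.log φ := by
    have : Real.log ((1-2*c) * φ) = Real.log (1-2*c) + Real.log φ :=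
      Real.log_mul (by positivity) (by positivity)
    rw [id2] at this
    linarith
  have hBc : B c = φ := by
    have hl : Real.log (B c) = Real.log φ := by
      rw [hlogB c hc1 hc2, hlogc1, hlogc2]; ring
    calc B c = Real.exp (Real.log (B c)) := (Real.exp_log (hBpos c hc1 hc2)).symm
      _ = Real.exp (Real.log φ) := by rw [hl]
      _ = φ := Real.exp_log hφpos
  intro a ha hb
  refine ⟨?_, ?_⟩
  · rw [hBc]
    exact key a ha hb
  · have hφlt : φ < 1.6181 := by
      rw [hφdef]
      linarith [h5ub]
    exact lt_of_le_of_lt (key a ha hb) hφlt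
end

section
/- Let π be a permutation of [k] and τ a permutation of [k] (an embedding order); set P_i = {(τ(1), π(τ(1))), …, (τ(i), π(τ(i)))} ⊆ S_π. If τ is the identity permutation (left-to-right order), then for every i, the boundary bd(P_i) has size at most 2k/3 + 1. -/
/-- `q` and `r` are neighbors in the incidence graph `G_π` (adjacent index or
adjacent value).  Points of `S_π` are identified with their indices. -/
abbrev nbr {k : ℕ} (π : Equiv.Perm (Fin k)) (p q : Fin k) : Prop :=
  (p : ℕ) + 1 = (q : ℕ) ∨ (q : ℕ) + 1 = (p : ℕ) ∨
  (π p : ℕ) + 1 = (π q : ℕ) ∨ (π q : ℕ) + 1 = (π p : ℕ)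

/-- The boundary of a set `P ⊆ S_π`: points of `P` having a neighbor outside `P`. -/
def bdry {k : ℕ} (π : Equiv.Perm (Fin k)) (P : Finset (Fin k)) : Finset (Fin k) :=
  P.filter (fun p => ∃ q : Fin k, q ∉ P ∧ nbr π p q)

/-- for the identity embedding order (left-to-right), every prefix
`P_i = {(1, π(1)), …, (i, π(i))}` has boundary of size at most `2k/3 + 1`. -/
theorem bdry_identity_order_le {k : ℕ} (π : Equiv.Perm (Fin k)) (i : ℕ) (hi : i ≤ k) :
    ((bdry π (Finset.univ.filter (fun q : Fin k => (q : ℕ) < i))).card : ℝ)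
      ≤ 2 * (k : ℝ) / 3 + 1 := by
  set P := Finset.univ.filter (fun q : Fin k => (q : ℕ) < i) with hP
  rcases Nat.eq_zero_or_pos i with hi0 | hi0
  · have hPe : P = ∅ := by ext q; simp [hP, hi0]
    have : bdry π P = ∅ := by simp [bdry, hPe]
    rw [this]
    simp
    positivity
  · have hk0 : 0 < k := lt_of_lt_of_le hi0 hi
    set p0 : Fin k := ⟨i - 1, by omega⟩ with hp0
    set B := P.filter (fun p => ∃ q : Fin k, q ∉ P ∧
        ((π p : ℕ) + 1 = (π q : ℕ) ∨ (π q : ℕ) + 1 = (π p : ℕ))) with hB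
    have hmemP : ∀ q : Fin k, q ∈ P ↔ (q : ℕ) < i := by
      intro q; simp [hP]
    have hsub : bdry π P ⊆ insert p0 B := by
      intro p hp
      rw [bdry, Finset.mem_filter] at hp
      obtain ⟨hpP, q, hq, hn⟩ := hp
      have hpi : (p : ℕ) < i := (hmemP p).1 hpP
      have hqi : ¬ (q : ℕ) < i := fun h => hq ((hmemP q).2 h)
      rw [Finset.mem_insert]
      rcases hn with h | h | h | h
      · left
        apply Fin.ext
        simp only [hp0]
        omega
      · exact absurd ((hmemP q).2 (by omega)) hq
      · right; rw [hB, Finset.mem_filter]; exact ⟨hpP, q, hq, Or.inl h⟩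
      · right; rw [hB, Finset.mem_filter]; exact ⟨hpP, q, hq, Or.inr h⟩
    have hcard1 : (bdry π P).card ≤ B.card + 1 :=
      le_trans (Finset.card_le_card hsub) (Finset.card_insert_le _ _)
    -- card P = i
    have hPcard : P.card = i := by
      have hmap : P = Finset.map (Fin.castLEEmb hi) Finset.univ := by
        ext q
        simp only [hmemP, Finset.mem_map, Finset.mem_univ, true_and, Fin.castLEEmb,
          Function.Embedding.coeFn_mk]
        constructor
        · intro h; exact ⟨⟨q, h⟩, rfl⟩
        · rintro ⟨a, rfl⟩; exact a.isLt
      rw [hmap, Finset.card_map, Finset.card_univ, Fintype.card_fin]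
    have hPc : Pᶜ.card = k - i := by
      rw [Finset.card_compl, hPcard, Fintype.card_fin]
    -- B ⊆ P
    have hB1 : B.card ≤ i := hPcard ▸ Finset.card_le_card (Finset.filter_subset _ _)
    -- B injects into D
    have hB2 : B.card ≤ 2 * (k - i) := by
      set D := Pᶜ.image (fun q : Fin k => (π q : ℕ) - 1) ∪
               Pᶜ.image (fun q : Fin k => (π q : ℕ) + 1) with hD
      have hinj : Set.InjOn (fun p : Fin k => (π p : ℕ)) B := by
        intro a _ b _ h
        exact π.injective (Fin.ext h)
      have hmaps : ∀ p ∈ B, (π p : ℕ) ∈ D := by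
        intro p hp
        rw [hB, Finset.mem_filter] at hp
        obtain ⟨_, q, hq, h | h⟩ := hp
        · apply Finset.mem_union_left
          exact Finset.mem_image.2 ⟨q, Finset.mem_compl.2 hq, by omega⟩
        · apply Finset.mem_union_right
          exact Finset.mem_image.2 ⟨q, Finset.mem_compl.2 hq, by omega⟩
      calc B.card = (B.image (fun p : Fin k => (π p : ℕ))).card :=
              (Finset.card_image_of_injOn hinj).symm
        _ ≤ D.card := Finset.card_le_card (Finset.image_subset_iff.2 hmaps)
        _ ≤ (Pᶜ.image (fun q : Fin k => (π q : ℕ) - 1)).card +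
            (Pᶜ.image (fun q : Fin k => (π q : ℕ) + 1)).card := Finset.card_union_le _ _
        _ ≤ Pᶜ.card + Pᶜ.card := add_le_add (Finset.card_image_le) (Finset.card_image_le)
        _ = 2 * (k - i) := by rw [hPc]; ring
    -- final arithmetic
    have hreal : ((bdry π P).card : ℝ) ≤ (B.card : ℝ) + 1 := by exact_mod_cast hcard1
    rcases le_or_gt (3 * i) (2 * k) with h3 | h3
    · have : (B.card : ℝ) ≤ i := by exact_mod_cast hB1
      have : (3 : ℝ) * i ≤ 2 * k := by exact_mod_cast h3
      linarith
    · have h1 : (B.card : ℝ) ≤ 2 * ((k : ℝ) - i) := by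
        have := hB2
        have : (B.card : ℝ) ≤ 2 * ((k - i : ℕ) : ℝ) := by exact_mod_cast hB2
        rwa [Nat.cast_sub hi] at this
      have : (2 : ℝ) * k < 3 * i := by exact_mod_cast h3
      linarith
end

section
/- Let k be even and let Q^E ⊆ S_π be the set of even-index points and Q^O the set of odd-index points of a permutation π of [k]. Consider the embedding order that first takes all points of Q^E (in any order) and then the points of Q^O in increasing order of value. For every prefix P of this order that contains Q^E, every point p ∈ P all of whose existing neighbors lie in P is not in bd(P); in particular, once Q^E and the j lowest-valued odd points are embedded, the boundary size is at most k/2 + 1. -/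
/-- let `k` be even, `Q^E` the even-index points, `Q^O` the odd-index
points.  (1) For every set `P` containing `Q^E`, every point of `P` all of whose
existing neighbors lie in `P` is not on the boundary of `P`.  (2) For every `j`, the
prefix consisting of `Q^E` together with the `j` lowest-valued odd-index points has
boundary of size at most `k/2 + 1`. -/
theorem bdry_even_odd_order {k : ℕ} (hk : Even k) (π : Equiv.Perm (Fin k)) :
    (∀ P : Finset (Fin k), (∀ x : Fin k, Even ((x : ℕ) + 1) → x ∈ P) →
      ∀ p ∈ P, (∀ q : Fin k, nbr π p q → q ∈ P) → p ∉ bdry π P) ∧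
    (∀ j : ℕ,
      ((bdry π (Finset.univ.filter (fun x : Fin k =>
          Even ((x : ℕ) + 1) ∨ (Odd ((x : ℕ) + 1) ∧
            (Finset.univ.filter (fun y : Fin k =>
              Odd ((y : ℕ) + 1) ∧ π y < π x)).card < j)))).card : ℝ)
        ≤ (k : ℝ) / 2 + 1) := by
  constructor
  · intro P _ p _ hall hbd
    rw [bdry, Finset.mem_filter] at hbd
    obtain ⟨_, q, hq, hn⟩ := hbd
    exact hq (hall q hn)
  · intro j
    set rk : Fin k → ℕ := fun x =>
      (Finset.univ.filter (fun y : Fin k => Odd ((y : ℕ) + 1) ∧ π y < π x)).card with hrk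
    set P : Finset (Fin k) := Finset.univ.filter (fun x : Fin k =>
      Even ((x : ℕ) + 1) ∨ (Odd ((x : ℕ) + 1) ∧ rk x < j)) with hP
    set E : Finset (Fin k) := Finset.univ.filter (fun x : Fin k => Even ((x : ℕ) + 1)) with hE
    set O' : Finset (Fin k) := Finset.univ.filter
      (fun x : Fin k => Odd ((x : ℕ) + 1) ∧ rk x + 1 = j) with hO
    have hsub : bdry π P ⊆ E ∪ O' := by
      intro p hp
      rw [bdry, Finset.mem_filter] at hp
      obtain ⟨hpP, q, hqP, hn⟩ := hp
      rw [hP, Finset.mem_filter] at hpP hqP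
      rcases Nat.even_or_odd ((p : ℕ) + 1) with hpe | hpo
      · exact Finset.mem_union_left _ (Finset.mem_filter.2 ⟨Finset.mem_univ _, hpe⟩)
      have hrp : rk p < j := by
        rcases hpP.2 with h | h
        · exact absurd h (Nat.not_even_iff_odd.mpr hpo)
        · exact h.2
      have hqo : Odd ((q : ℕ) + 1) ∧ ¬ rk q < j := by
        rcases Nat.even_or_odd ((q : ℕ) + 1) with hqe | hqo
        · exact absurd ⟨Finset.mem_univ _, Or.inl hqe⟩ hqP
        · exact ⟨hqo, fun hc => hqP ⟨Finset.mem_univ _, Or.inr ⟨hqo, hc⟩⟩⟩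
      have hqj : j ≤ rk q := Nat.le_of_not_lt hqo.2
      -- index adjacency impossible: p,q both even index values (odd 1-based)
      have hne : p ≠ q := by
        rintro rfl; exact absurd hrp hqo.2
      have hpo' := hpo
      have hqo' := hqo.1
      rw [Nat.odd_iff] at hpo' hqo'
      rcases hn with h | h | h | h
      · exfalso; omega
      · exfalso; omega
      · -- π p + 1 = π q : p has rank j - 1
        have hlt : π p < π q := by
          rw [Fin.lt_iff_val_lt_val]; omega
        have hsub2 : (Finset.univ.filter (fun y : Fin k => Odd ((y : ℕ) + 1) ∧ π y < π q))
            ⊆ insert p (Finset.univ.filter (fun y : Fin k => Odd ((y : ℕ) + 1) ∧ π y < π p)) := by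
          intro y hy
          rw [Finset.mem_filter] at hy
          rcases eq_or_ne y p with rfl | hyp
          · exact Finset.mem_insert_self _ _
          · refine Finset.mem_insert_of_mem (Finset.mem_filter.2 ⟨Finset.mem_univ _, hy.2.1, ?_⟩)
            have h1 : (π y : ℕ) < (π q : ℕ) := hy.2.2
            have h2 : (π y : ℕ) ≠ (π p : ℕ) := fun hc =>
              hyp (π.injective (Fin.ext hc))
            rw [Fin.lt_iff_val_lt_val]; omega
        have hcard : rk q ≤ rk p + 1 := by
          calc rk q ≤ (insert p (Finset.univ.filter
              (fun y : Fin k => Odd ((y : ℕ) + 1) ∧ π y < π p))).card :=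
            Finset.card_le_card hsub2
          _ ≤ rk p + 1 := Finset.card_insert_le _ _
        have : rk p + 1 = j := by omega
        exact Finset.mem_union_right _ (Finset.mem_filter.2 ⟨Finset.mem_univ _, hpo, this⟩)
      · -- π q + 1 = π p: rank q < rank p, contradiction
        exfalso
        have hlt : π q < π p := by rw [Fin.lt_iff_val_lt_val]; omega
        have hsub2 : insert q (Finset.univ.filter
            (fun y : Fin k => Odd ((y : ℕ) + 1) ∧ π y < π q))
            ⊆ (Finset.univ.filter (fun y : Fin k => Odd ((y : ℕ) + 1) ∧ π y < π p)) := by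
          intro y hy
          rcases Finset.mem_insert.mp hy with rfl | hy'
          · exact Finset.mem_filter.2 ⟨Finset.mem_univ _, hqo.1, hlt⟩
          · rw [Finset.mem_filter] at hy' ⊢
            exact ⟨Finset.mem_univ _, hy'.2.1, hy'.2.2.trans hlt⟩
        have hqn : q ∉ (Finset.univ.filter
            (fun y : Fin k => Odd ((y : ℕ) + 1) ∧ π y < π q)) := by
          simp [Finset.mem_filter]
        have : rk q + 1 ≤ rk p := by
          have := Finset.card_le_card hsub2
          rwa [Finset.card_insert_of_notMem hqn] at this
        omega
    have hEcard : E.card ≤ k / 2 := by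
      -- inject E into evens via x ↦ x - 1
      have hinj : ∀ x ∈ E, ∀ y ∈ E, (⟨(x : ℕ) - 1, lt_of_le_of_lt (Nat.sub_le _ _) x.isLt⟩ : Fin k)
          = ⟨(y : ℕ) - 1, lt_of_le_of_lt (Nat.sub_le _ _) y.isLt⟩ → x = y := by
        intro x hx y hy h
        rw [hE, Finset.mem_filter] at hx hy
        have hx1 : 1 ≤ (x : ℕ) := by
          rcases Nat.eq_zero_or_pos (x : ℕ) with h0 | h0
          · exfalso; rw [h0] at hx; simpa using hx.2
          · exact h0
        have hy1 : 1 ≤ (y : ℕ) := by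
          rcases Nat.eq_zero_or_pos (y : ℕ) with h0 | h0
          · exfalso; rw [h0] at hy; simpa using hy.2
          · exact h0
        have := Fin.val_eq_of_eq h
        simp at this
        exact Fin.ext (by omega)
      have himg : ∀ x ∈ E, (⟨(x : ℕ) - 1, lt_of_le_of_lt (Nat.sub_le _ _) x.isLt⟩ : Fin k)
          ∈ Finset.univ.filter (fun x : Fin k => ¬ Even ((x : ℕ) + 1)) := by
        intro x hx
        rw [hE, Finset.mem_filter] at hx
        have hx1 : 1 ≤ (x : ℕ) := by
          rcases Nat.eq_zero_or_pos (x : ℕ) with h0 | h0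
          · exfalso; rw [h0] at hx; simpa using hx.2
          · exact h0
        rw [Finset.mem_filter]
        refine ⟨Finset.mem_univ _, ?_⟩
        have hxe : Even ((x : ℕ) + 1) := hx.2
        simp only
        intro hc
        have : ((x:ℕ) - 1) + 1 = (x : ℕ) := by omega
        rw [this] at hc
        rw [Nat.even_add_one] at hxe
        exact hxe hc
      have hle : E.card ≤ (Finset.univ.filter (fun x : Fin k => ¬ Even ((x : ℕ) + 1))).card :=
        Finset.card_le_card_of_injOn _ himg hinj
      have hsum : E.card + (Finset.univ.filter (fun x : Fin k => ¬ Even ((x : ℕ) + 1))).card = k := by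
        rw [hE, Finset.card_filter_add_card_filter_not]
        simp
      omega
    have hOcard : O'.card ≤ 1 := by
      rw [Finset.card_le_one]
      intro a ha b hb
      rw [hO, Finset.mem_filter] at ha hb
      by_contra hab
      rcases lt_trichotomy (π a) (π b) with h | h | h
      · have : insert a (Finset.univ.filter
            (fun y : Fin k => Odd ((y : ℕ) + 1) ∧ π y < π a))
            ⊆ (Finset.univ.filter (fun y : Fin k => Odd ((y : ℕ) + 1) ∧ π y < π b)) := by
          intro y hy
          rcases Finset.mem_insert.mp hy with rfl | hy'
          · exact Finset.mem_filter.2 ⟨Finset.mem_univ _, ha.2.1, h⟩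
          · rw [Finset.mem_filter] at hy' ⊢
            exact ⟨Finset.mem_univ _, hy'.2.1, hy'.2.2.trans h⟩
        have han : a ∉ (Finset.univ.filter
            (fun y : Fin k => Odd ((y : ℕ) + 1) ∧ π y < π a)) := by
          simp [Finset.mem_filter]
        have := Finset.card_le_card this
        rw [Finset.card_insert_of_notMem han] at this
        have h1 := ha.2.2; have h2 := hb.2.2
        simp only [hrk] at *
        omega
      · exact hab (π.injective h)
      · have : insert b (Finset.univ.filter
            (fun y : Fin k => Odd ((y : ℕ) + 1) ∧ π y < π b))
            ⊆ (Finset.univ.filter (fun y : Fin k => Odd ((y : ℕ) + 1) ∧ π y < π a)) := by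
          intro y hy
          rcases Finset.mem_insert.mp hy with rfl | hy'
          · exact Finset.mem_filter.2 ⟨Finset.mem_univ _, hb.2.1, h⟩
          · rw [Finset.mem_filter] at hy' ⊢
            exact ⟨Finset.mem_univ _, hy'.2.1, hy'.2.2.trans h⟩
        have hbn : b ∉ (Finset.univ.filter
            (fun y : Fin k => Odd ((y : ℕ) + 1) ∧ π y < π b)) := by
          simp [Finset.mem_filter]
        have := Finset.card_le_card this
        rw [Finset.card_insert_of_notMem hbn] at this
        have h1 := ha.2.2; have h2 := hb.2.2
        simp only [hrk] at *
        omega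
    have hcard : (bdry π P).card ≤ k / 2 + 1 := by
      calc (bdry π P).card ≤ (E ∪ O').card := Finset.card_le_card hsub
        _ ≤ E.card + O'.card := Finset.card_union_le _ _
        _ ≤ k / 2 + 1 := by omega
    obtain ⟨m, hm⟩ := hk
    have hk2 : k / 2 = m := by omega
    have : ((bdry π P).card : ℝ) ≤ ((k / 2 + 1 : ℕ) : ℝ) := by exact_mod_cast hcard
    calc ((bdry π P).card : ℝ) ≤ ((k / 2 + 1 : ℕ) : ℝ) := this
      _ = (k : ℝ) / 2 + 1 := by
        rw [hk2]; push_cast [hm]; ring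
end

section
/- Let a be an even positive integer and b a positive integer with ab = k, and let π(a,b) be the permutation of [k] defined as the unique permutation order-isomorphic to the concatenation T_1, …, T_b, where T_i interleaves L_i (the even integers in [1+(i-1)a, ia] in decreasing order) and R_i (the odd integers in [1+ia, (i+1)a] in increasing order). Then π(a,b) avoids the pattern (4,3,1,2). -/
/-- The value at (0-based) position `p` of the sequence `T_1, …, T_b` (which is
order-isomorphic to the permutation `π(a,b)`): writing `p = i·a + q` with `q < a`,
an even offset `q` gives the element `(i+1)·a - q` of `L_{i+1}` (the even integers of
`[1+ia, (i+1)a]` in decreasing order) and an odd offset `q` gives the element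
`(i+1)·a + q` of `R_{i+1}` (the odd integers of `[1+(i+1)a, (i+2)a]` in increasing
order), the two lists being interleaved. -/
def gridSeq (a p : ℕ) : ℕ :=
  if p % a % 2 = 0 then (p / a + 1) * a - p % a else (p / a + 1) * a + p % a

lemma gridSeq_eq' (a i q : ℕ) (ha : 0 < a) (hq : q < a) :
    gridSeq a (a * i + q) = if q % 2 = 0 then a * i + (a - q) else a * i + a + q := by
  unfold gridSeq
  have h1 : (a * i + q) % a = q := by
    rw [Nat.mul_add_mod, Nat.mod_eq_of_lt hq]
  have h2 : (a * i + q) / a = i := by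
    rw [Nat.mul_add_div ha, Nat.div_eq_of_lt hq, add_zero]
  rw [h1, h2, add_mul, one_mul, Nat.mul_comm i a]
  generalize a * i = X
  split <;> omega

lemma blk_le {a i i' q q' : ℕ} (hq' : q' < a) (h : a * i + q < a * i' + q') :
    i ≤ i' := by
  by_contra hc
  push_neg at hc
  have h2 : a * (i' + 1) ≤ a * i := Nat.mul_le_mul_left a hc
  rw [Nat.mul_add, Nat.mul_one] at h2
  linarith

/-- for `a` even positive and `b` positive with `ab = k`, the
permutation `π(a,b)` avoids the pattern `(4,3,1,2)`: there are no positions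
`p₁ < p₂ < p₃ < p₄` whose values `v₁, v₂, v₃, v₄` satisfy `v₃ < v₄ < v₂ < v₁`. -/
theorem gridPerm_avoids_4312 (a b k : ℕ) (ha : Even a) (ha0 : 0 < a) (hb : 0 < b)
    (hk : k = a * b) :
    ¬ ∃ p₁ p₂ p₃ p₄ : ℕ, p₁ < p₂ ∧ p₂ < p₃ ∧ p₃ < p₄ ∧ p₄ < k ∧
      gridSeq a p₃ < gridSeq a p₄ ∧ gridSeq a p₄ < gridSeq a p₂ ∧
      gridSeq a p₂ < gridSeq a p₁ := by
  rintro ⟨p1, p2, p3, p4, h12, h23, h34, h4k, hv34, hv42, hv21⟩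
  obtain ⟨i1, q1, hq1, rfl⟩ : ∃ i q, q < a ∧ p1 = a * i + q :=
    ⟨p1 / a, p1 % a, Nat.mod_lt _ ha0, (Nat.div_add_mod p1 a).symm⟩
  obtain ⟨i2, q2, hq2, rfl⟩ : ∃ i q, q < a ∧ p2 = a * i + q :=
    ⟨p2 / a, p2 % a, Nat.mod_lt _ ha0, (Nat.div_add_mod p2 a).symm⟩
  obtain ⟨i3, q3, hq3, rfl⟩ : ∃ i q, q < a ∧ p3 = a * i + q :=
    ⟨p3 / a, p3 % a, Nat.mod_lt _ ha0, (Nat.div_add_mod p3 a).symm⟩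
  obtain ⟨i4, q4, hq4, rfl⟩ : ∃ i q, q < a ∧ p4 = a * i + q :=
    ⟨p4 / a, p4 % a, Nat.mod_lt _ ha0, (Nat.div_add_mod p4 a).symm⟩
  rw [gridSeq_eq' a i1 q1 ha0 hq1] at hv21
  rw [gridSeq_eq' a i2 q2 ha0 hq2] at hv21 hv42
  rw [gridSeq_eq' a i3 q3 ha0 hq3] at hv34
  rw [gridSeq_eq' a i4 q4 ha0 hq4] at hv34 hv42
  have hA23 : a * i2 ≤ a * i3 := Nat.mul_le_mul_left a (blk_le hq3 h23)
  have hA34 : a * i3 ≤ a * i4 := Nat.mul_le_mul_left a (blk_le hq4 h34)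
  have hA24 : a * i2 + a ≤ a * i4 ∨ a * i2 = a * i4 := by
    rcases lt_or_eq_of_le (blk_le hq4 (lt_trans h23 h34)) with hlt | heq
    · left
      have h2 : a * (i2 + 1) ≤ a * i4 := Nat.mul_le_mul_left a hlt
      rw [Nat.mul_add, Nat.mul_one] at h2
      exact h2
    · right; rw [heq]
  clear h4k hk hb ha
  generalize a * i1 = A1 at h12 hv21
  generalize a * i2 = A2 at h12 h23 hv21 hv42 hA23 hA24
  generalize a * i3 = A3 at h23 h34 hv34 hA23 hA34
  generalize a * i4 = A4 at h34 hv34 hv42 hA34 hA24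
  split_ifs at hv34 hv42 hv21 <;> omega
end
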